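/- Let (X_z)_{z ∈ S} be a finite family of N random variables with values in [0,1], indexed by a set S, such that E[X_{z₁} ⋯ X_{z_{2k}}] ≤ E[X]^j + 4jφ for every 2k-tuple (z₁,...,z_{2k}) with exactly j distinct entries, where all X_z have the same first moment E[X] and φ ∈ [0,1]. Then E[(N^{-1} ∑_{z∈S} X_z)^{2k}] ≤ C(k) ( max{E[X], N^{-1}}^{2k} + φ ) for a constant C(k) depending only on k. -/

import Mathlib

open MeasureTheory

/-- Moment bound for averages of `[0,1]`-valued random variables: if
`E[X_{z₁}⋯X_{z_{2k}}] ≤ E[X]^j + 4jφ` for every `2k`-tuple with exactly `j` distinct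
entries, then `E[(N⁻¹ ∑_{z∈S} X_z)^{2k}] ≤ C(k)(max{E[X], N⁻¹}^{2k} + φ)`. -/
theorem stmt15 (k : ℕ) (hk : 1 ≤ k) :
    ∃ C : ℝ, 1 ≤ C ∧
      ∀ (Ω : Type) (_ : MeasurableSpace Ω) (P : Measure Ω),
        IsProbabilityMeasure P →
        ∀ (ι : Type) (S : Finset ι) (X : ι → Ω → ℝ) (EX φ : ℝ),
          S.Nonempty →
          (∀ z ∈ S, Measurable (X z)) →
          (∀ z ∈ S, ∀ ω, X z ω ∈ Set.Icc (0 : ℝ) 1) →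
          (∀ z ∈ S, ∫ ω, X z ω ∂P = EX) →
          0 ≤ φ → φ ≤ 1 →
          (∀ z : Fin (2 * k) → ι, (∀ i, z i ∈ S) →
            ∫ ω, ∏ i, X (z i) ω ∂P ≤
              EX ^ (Set.range z).ncard + 4 * ((Set.range z).ncard : ℝ) * φ) →
          ∫ ω, (((S.card : ℝ))⁻¹ * ∑ z ∈ S, X z ω) ^ (2 * k) ∂P ≤
            C * ((max EX ((S.card : ℝ))⁻¹) ^ (2 * k) + φ) := by
  classical
  set n := 2 * k with hn
  have hn1 : 1 ≤ n := by omega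
  refine ⟨3 * (n : ℝ) ^ n + 4 * n, ?_, ?_⟩
  · have h1 : (1 : ℝ) ≤ (n : ℝ) ^ n := one_le_pow₀ (by exact_mod_cast hn1)
    have h2 : (0 : ℝ) ≤ (n : ℝ) := by positivity
    nlinarith
  intro Ω mΩ P hP ι S X EX φ hS hmeas hIcc hEX hφ0 hφ1 hmom
  set N := S.card with hNdef
  have hN1 : 1 ≤ N := Finset.card_pos.mpr hS
  have hNR : (0 : ℝ) < (N : ℝ) := by exact_mod_cast hN1
  have hNne : (N : ℝ) ≠ 0 := ne_of_gt hNR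
  set M := max EX ((N : ℝ)⁻¹) with hM
  have hMinv : (N : ℝ)⁻¹ ≤ M := le_max_right _ _
  have hMpos : 0 < M := lt_of_lt_of_le (inv_pos.mpr hNR) hMinv
  have hMN : 1 ≤ M * (N : ℝ) := by
    have := mul_le_mul_of_nonneg_right hMinv (le_of_lt hNR)
    rwa [inv_mul_cancel₀ hNne] at this
  have hEX0 : 0 ≤ EX := by
    obtain ⟨z0, hz0⟩ := hS
    rw [← hEX z0 hz0]
    exact integral_nonneg fun ω => (hIcc z0 hz0 ω).1
  have hEXM : EX ≤ M := le_max_left _ _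
  -- the finset of tuples
  set piF : Finset (Fin n → ι) := Fintype.piFinset (fun _ : Fin n => S) with hpiF
  have hmemF : ∀ p ∈ piF, ∀ i, p i ∈ S := by
    intro p hp i
    exact Fintype.mem_piFinset.mp hp i
  -- pointwise expansion of the power of the sum
  have hpt : ∀ ω, (((N : ℝ))⁻¹ * ∑ z ∈ S, X z ω) ^ n
      = ((N : ℝ)⁻¹) ^ n * ∑ p ∈ piF, ∏ i, X (p i) ω := by
    intro ω
    rw [mul_pow, Finset.sum_pow']
  -- integrability of each product
  have hint : ∀ p ∈ piF, Integrable (fun ω => ∏ i, X (p i) ω) P := by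
    intro p hp
    have hm : Measurable fun ω => ∏ i, X (p i) ω :=
      Finset.measurable_prod _ fun i _ => hmeas _ (hmemF p hp i)
    refine (integrable_const (1 : ℝ)).mono' hm.aestronglyMeasurable ?_
    filter_upwards with ω
    rw [Real.norm_eq_abs,
      abs_of_nonneg (Finset.prod_nonneg fun i _ => (hIcc _ (hmemF p hp i) ω).1)]
    exact Finset.prod_le_one (fun i _ => (hIcc _ (hmemF p hp i) ω).1)
      (fun i _ => (hIcc _ (hmemF p hp i) ω).2)
  -- compute the integral
  have hcalc : ∫ ω, (((N : ℝ))⁻¹ * ∑ z ∈ S, X z ω) ^ n ∂P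
      = ((N : ℝ)⁻¹) ^ n * ∑ p ∈ piF, ∫ ω, ∏ i, X (p i) ω ∂P := by
    simp_rw [hpt]
    rw [integral_const_mul, integral_finset_sum _ hint]
  -- range formula
  have hrange : ∀ p : Fin n → ι, (Set.range p).ncard = (Finset.univ.image p).card := by
    intro p
    rw [← Set.ncard_coe_finset, Finset.coe_image, Finset.coe_univ, Set.image_univ]
  have hcardle : ∀ p : Fin n → ι, (Finset.univ.image p).card ≤ n := by
    intro p
    calc (Finset.univ.image p).card ≤ (Finset.univ : Finset (Fin n)).card :=
          Finset.card_image_le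
      _ = n := by simp
  -- per-tuple moment bound
  have hterm : ∀ p ∈ piF, ∫ ω, ∏ i, X (p i) ω ∂P
      ≤ M ^ (Finset.univ.image p).card + 4 * (n : ℝ) * φ := by
    intro p hp
    have h1 := hmom p (hmemF p hp)
    rw [hrange p] at h1
    have h2 : EX ^ (Finset.univ.image p).card ≤ M ^ (Finset.univ.image p).card :=
      pow_le_pow_left₀ hEX0 hEXM _
    have h3 : 4 * ((Finset.univ.image p).card : ℝ) * φ ≤ 4 * (n : ℝ) * φ := by
      have : ((Finset.univ.image p).card : ℝ) ≤ (n : ℝ) := by exact_mod_cast hcardle p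
      nlinarith
    linarith
  -- sum over tuples
  have hsum1 : ∑ p ∈ piF, ∫ ω, ∏ i, X (p i) ω ∂P
      ≤ (∑ p ∈ piF, M ^ (Finset.univ.image p).card) + (N : ℝ) ^ n * (4 * (n : ℝ) * φ) := by
    have h := Finset.sum_le_sum hterm
    rw [Finset.sum_add_distrib, Finset.sum_const] at h
    have hcardF : piF.card = N ^ n := by
      rw [hpiF, Fintype.card_piFinset_const]
    rw [hcardF] at h
    calc ∑ p ∈ piF, ∫ ω, ∏ i, X (p i) ω ∂P
        ≤ (∑ p ∈ piF, M ^ (Finset.univ.image p).card) + (N ^ n) • (4 * (n : ℝ) * φ) := h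
      _ = (∑ p ∈ piF, M ^ (Finset.univ.image p).card) + (N : ℝ) ^ n * (4 * (n : ℝ) * φ) := by
          rw [nsmul_eq_mul]; push_cast; ring
  -- key per-subset inequality
  have hkey : ∀ a b : ℕ, a ≤ b → ((N : ℝ)⁻¹) ^ b * M ^ a ≤ M ^ b * ((N : ℝ)⁻¹) ^ a := by
    intro a b hab
    have h1 : (M * (N : ℝ)) ^ a ≤ (M * (N : ℝ)) ^ b := pow_le_pow_right₀ hMN hab
    rw [mul_pow, mul_pow] at h1
    have hNa : (0 : ℝ) < (N : ℝ) ^ a := pow_pos hNR a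
    have hNb : (0 : ℝ) < (N : ℝ) ^ b := pow_pos hNR b
    rw [inv_pow, inv_pow, mul_comm (((N : ℝ) ^ b)⁻¹), ← div_eq_mul_inv, ← div_eq_mul_inv,
      div_le_div_iff₀ hNb hNa]
    linarith
  -- combinatorics
  set t : Finset (Finset ι) := piF.image (fun p => Finset.univ.image p) with ht
  have hfiber : ∑ p ∈ piF, M ^ (Finset.univ.image p).card
      = ∑ T ∈ t, ∑ p ∈ piF with Finset.univ.image p = T, M ^ T.card :=
    (Finset.sum_fiberwise_of_maps_to' (g := fun p => Finset.univ.image p) (t := t)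
      (fun p hp => Finset.mem_image_of_mem _ hp) (fun T => M ^ T.card)).symm
  have hfilter : ∀ T : Finset ι,
      ∑ p ∈ piF with Finset.univ.image p = T, M ^ T.card ≤ (T.card ^ n : ℝ) * M ^ T.card := by
    intro T
    rw [Finset.sum_const, nsmul_eq_mul]
    have hsub : (piF.filter (fun p => Finset.univ.image p = T))
        ⊆ Fintype.piFinset (fun _ : Fin n => T) := by
      intro p hp
      rw [Finset.mem_filter] at hp
      rw [Fintype.mem_piFinset]
      intro i
      rw [← hp.2]
      exact Finset.mem_image_of_mem _ (Finset.mem_univ i)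
    have hc : (piF.filter (fun p => Finset.univ.image p = T)).card ≤ T.card ^ n := by
      calc (piF.filter (fun p => Finset.univ.image p = T)).card
          ≤ (Fintype.piFinset (fun _ : Fin n => T)).card := Finset.card_le_card hsub
        _ = T.card ^ n := Fintype.card_piFinset_const _ _
    have hcR : ((piF.filter (fun p => Finset.univ.image p = T)).card : ℝ)
        ≤ (T.card ^ n : ℝ) := by exact_mod_cast hc
    exact mul_le_mul_of_nonneg_right hcR (le_of_lt (pow_pos hMpos _))
  have hTprop : ∀ T ∈ t, T.card ≤ n ∧ T ∈ S.powerset := by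
    intro T hT
    obtain ⟨p, hp, rfl⟩ := Finset.mem_image.mp hT
    refine ⟨hcardle p, Finset.mem_powerset.mpr ?_⟩
    intro x hx
    obtain ⟨i, _, rfl⟩ := Finset.mem_image.mp hx
    exact hmemF p hp i
  -- powerset sum identity
  have hpows : ∑ T ∈ S.powerset, ((N : ℝ)⁻¹) ^ T.card = ((N : ℝ)⁻¹ + 1) ^ N := by
    have h := Finset.prod_add (fun _ : ι => (N : ℝ)⁻¹) (fun _ => (1 : ℝ)) S
    simp only [Finset.prod_const, one_pow, mul_one] at h
    exact h.symm
  -- exp bound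
  have h3bound : ((N : ℝ)⁻¹ + 1) ^ N ≤ 3 := by
    have h1 : (N : ℝ)⁻¹ + 1 ≤ Real.exp ((N : ℝ)⁻¹) := Real.add_one_le_exp _
    have h2 : ((N : ℝ)⁻¹ + 1) ^ N ≤ Real.exp ((N : ℝ)⁻¹) ^ N :=
      pow_le_pow_left₀ (by positivity) h1 N
    have h4 : Real.exp ((N : ℝ)⁻¹) ^ N = Real.exp 1 := by
      rw [← Real.exp_nat_mul, mul_inv_cancel₀ hNne]
    rw [h4] at h2
    have := Real.exp_one_lt_d9
    nlinarith
  -- assemble combinatorial bound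
  have hcomb : ((N : ℝ)⁻¹) ^ n * ∑ p ∈ piF, M ^ (Finset.univ.image p).card
      ≤ 3 * (n : ℝ) ^ n * M ^ n := by
    rw [hfiber, Finset.mul_sum]
    have hterm2 : ∀ T ∈ t,
        ((N : ℝ)⁻¹) ^ n * ∑ p ∈ piF with Finset.univ.image p = T, M ^ T.card
        ≤ (n : ℝ) ^ n * M ^ n * ((N : ℝ)⁻¹) ^ T.card := by
      intro T hT
      obtain ⟨hTn, _⟩ := hTprop T hT
      have hA : ((N : ℝ)⁻¹) ^ n * ∑ p ∈ piF with Finset.univ.image p = T, M ^ T.card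
          ≤ ((N : ℝ)⁻¹) ^ n * ((T.card ^ n : ℝ) * M ^ T.card) := by
        exact mul_le_mul_of_nonneg_left (hfilter T) (by positivity)
      have hB : ((N : ℝ)⁻¹) ^ n * ((T.card ^ n : ℝ) * M ^ T.card)
          ≤ (n : ℝ) ^ n * M ^ n * ((N : ℝ)⁻¹) ^ T.card := by
        have hc1 : ((T.card : ℝ)) ^ n ≤ (n : ℝ) ^ n := by
          have : (T.card : ℝ) ≤ (n : ℝ) := by exact_mod_cast hTn
          exact pow_le_pow_left₀ (by positivity) this n
        have hc2 : ((N : ℝ)⁻¹) ^ n * M ^ T.card ≤ M ^ n * ((N : ℝ)⁻¹) ^ T.card :=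
          hkey T.card n hTn
        calc ((N : ℝ)⁻¹) ^ n * ((T.card ^ n : ℝ) * M ^ T.card)
            = ((T.card : ℝ)) ^ n * (((N : ℝ)⁻¹) ^ n * M ^ T.card) := by push_cast; ring
          _ ≤ (n : ℝ) ^ n * (M ^ n * ((N : ℝ)⁻¹) ^ T.card) := by
              apply mul_le_mul hc1 hc2 (by positivity) (by positivity)
          _ = (n : ℝ) ^ n * M ^ n * ((N : ℝ)⁻¹) ^ T.card := by ring
      exact hA.trans hB
    calc ∑ T ∈ t, ((N : ℝ)⁻¹) ^ n * ∑ p ∈ piF with Finset.univ.image p = T, M ^ T.card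
        ≤ ∑ T ∈ t, (n : ℝ) ^ n * M ^ n * ((N : ℝ)⁻¹) ^ T.card := Finset.sum_le_sum hterm2
      _ = (n : ℝ) ^ n * M ^ n * ∑ T ∈ t, ((N : ℝ)⁻¹) ^ T.card := by rw [Finset.mul_sum]
      _ ≤ (n : ℝ) ^ n * M ^ n * ∑ T ∈ S.powerset, ((N : ℝ)⁻¹) ^ T.card := by
          apply mul_le_mul_of_nonneg_left _ (by positivity)
          apply Finset.sum_le_sum_of_subset_of_nonneg
          · intro T hT; exact (hTprop T hT).2
          · intro T _ _; positivity
      _ = (n : ℝ) ^ n * M ^ n * (((N : ℝ)⁻¹ + 1) ^ N) := by rw [hpows]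
      _ ≤ (n : ℝ) ^ n * M ^ n * 3 := by
          apply mul_le_mul_of_nonneg_left h3bound (by positivity)
      _ = 3 * (n : ℝ) ^ n * M ^ n := by ring
  -- final assembly
  rw [hcalc]
  have hstep : ((N : ℝ)⁻¹) ^ n * ∑ p ∈ piF, ∫ ω, ∏ i, X (p i) ω ∂P
      ≤ ((N : ℝ)⁻¹) ^ n * ∑ p ∈ piF, M ^ (Finset.univ.image p).card
        + ((N : ℝ)⁻¹) ^ n * ((N : ℝ) ^ n * (4 * (n : ℝ) * φ)) := by
    have h := mul_le_mul_of_nonneg_left hsum1 (le_of_lt (pow_pos (inv_pos.mpr hNR) n))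
    rw [mul_add] at h
    exact h
  have hNN : ((N : ℝ)⁻¹) ^ n * ((N : ℝ) ^ n * (4 * (n : ℝ) * φ)) = 4 * (n : ℝ) * φ := by
    rw [← mul_assoc, inv_pow, inv_mul_cancel₀ (pow_ne_zero n hNne), one_mul]
  rw [hNN] at hstep
  have hfin : 3 * (n : ℝ) ^ n * M ^ n + 4 * (n : ℝ) * φ
      ≤ (3 * (n : ℝ) ^ n + 4 * n) * (M ^ n + φ) := by
    have hMn : (0 : ℝ) ≤ M ^ n := le_of_lt (pow_pos hMpos n)
    have hnn : (0 : ℝ) ≤ (n : ℝ) ^ n := by positivity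
    have hnr : (0 : ℝ) ≤ (n : ℝ) := by positivity
    have e : (3 * (n : ℝ) ^ n + 4 * n) * (M ^ n + φ)
        = 3 * (n : ℝ) ^ n * M ^ n + 4 * (n : ℝ) * φ
          + (3 * ((n : ℝ) ^ n * φ) + 4 * ((n : ℝ) * M ^ n)) := by ring
    have p1 : (0 : ℝ) ≤ (n : ℝ) ^ n * φ := mul_nonneg hnn hφ0
    have p2 : (0 : ℝ) ≤ (n : ℝ) * M ^ n := mul_nonneg hnr hMn
    linarith
  calc ((N : ℝ)⁻¹) ^ n * ∑ p ∈ piF, ∫ ω, ∏ i, X (p i) ω ∂P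
      ≤ ((N : ℝ)⁻¹) ^ n * ∑ p ∈ piF, M ^ (Finset.univ.image p).card + 4 * (n : ℝ) * φ := hstep
    _ ≤ 3 * (n : ℝ) ^ n * M ^ n + 4 * (n : ℝ) * φ := add_le_add_left hcomb _
    _ ≤ (3 * (n : ℝ) ^ n + 4 * n) * (M ^ n + φ) := hfin
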